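/- Assume ∫_{(0,1)} ξ ln(1/ξ) ν(dξ) < ∞ and ∫_{(0,∞)} (ξ ∧ 1) ν(dξ) < ∞. Then for every t > 0, λ := ∫₀^t ∫_{(0,∞)} (1 - exp(-2aξ/(σ²(e^{as}-1)))) ν(dξ) ds < ∞. -/

import Mathlib

open MeasureTheory ENNReal Set

private lemma key_ineq (a σ s ξ : ℝ) (ha : 0 < a) (hσ : 0 < σ) (hs : 0 < s) :
    ENNReal.ofReal (1 - Real.exp (-(2 * a * ξ) / (σ ^ 2 * (Real.exp (a * s) - 1)))) ≤
      ENNReal.ofReal (min (2 / σ ^ 2 * ξ / s) 1) := by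
  have hσ2 : 0 < σ ^ 2 := by positivity
  have hexp : a * s + 1 ≤ Real.exp (a * s) := Real.add_one_le_exp _
  have has : 0 < a * s := mul_pos ha hs
  have hD : 0 < σ ^ 2 * (Real.exp (a * s) - 1) := by nlinarith
  rcases le_or_gt ξ 0 with hξ | hξ
  · have hnum : 0 ≤ -(2 * a * ξ) := by nlinarith
    have h0 : 0 ≤ -(2 * a * ξ) / (σ ^ 2 * (Real.exp (a * s) - 1)) :=
      div_nonneg hnum hD.le
    have h1 : (1 : ℝ) ≤ Real.exp (-(2 * a * ξ) / (σ ^ 2 * (Real.exp (a * s) - 1))) :=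
      Real.one_le_exp h0
    have : ENNReal.ofReal (1 - Real.exp (-(2 * a * ξ) / (σ ^ 2 * (Real.exp (a * s) - 1)))) = 0 :=
      ENNReal.ofReal_eq_zero.2 (by linarith)
    rw [this]; exact zero_le
  · apply ENNReal.ofReal_le_ofReal
    rw [neg_div]
    set x := (2 * a * ξ) / (σ ^ 2 * (Real.exp (a * s) - 1)) with hx_def
    apply le_min
    · have h1 : 1 - Real.exp (-x) ≤ x := by
        have := Real.add_one_le_exp (-x); linarith
      have h2 : x ≤ 2 / σ ^ 2 * ξ / s := by
        have hle : σ ^ 2 * (a * s) ≤ σ ^ 2 * (Real.exp (a * s) - 1) := by nlinarith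
        have hnum : 0 ≤ 2 * a * ξ := by positivity
        have hd2 : 0 < σ ^ 2 * (a * s) := by positivity
        calc x ≤ (2 * a * ξ) / (σ ^ 2 * (a * s)) := by
              exact div_le_div_of_nonneg_left hnum hd2 hle
          _ = 2 / σ ^ 2 * ξ / s := by field_simp
      linarith
    · have := Real.exp_nonneg (-x); linarith

private lemma I_bound (c t ξ : ℝ) (hc : 0 < c) (ht : 0 < t) (hξ : 0 < ξ) :
    ∫⁻ s in Ioo (0 : ℝ) t, ENNReal.ofReal (min (c * ξ / s) 1) ≤
      ENNReal.ofReal (t + c * (1 + |Real.log t - Real.log c|)) * ENNReal.ofReal (min ξ 1)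
        + ENNReal.ofReal c *
            (Ioo (0 : ℝ) 1).indicator (fun x => ENNReal.ofReal (x * Real.log (1 / x))) ξ := by
  set C1 : ℝ := t + c * (1 + |Real.log t - Real.log c|) with hC1_def
  have hC1c : c ≤ C1 := by
    have h1 : 0 ≤ |Real.log t - Real.log c| := abs_nonneg _
    nlinarith
  have hC1t : t ≤ C1 := by
    have h1 : 0 ≤ |Real.log t - Real.log c| := abs_nonneg _
    nlinarith
  have hC1 : 0 < C1 := lt_of_lt_of_le ht hC1t
  have htriv : ∫⁻ s in Ioo (0 : ℝ) t, ENNReal.ofReal (min (c * ξ / s) 1) ≤ ENNReal.ofReal t := by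
    calc ∫⁻ s in Ioo (0 : ℝ) t, ENNReal.ofReal (min (c * ξ / s) 1)
        ≤ ∫⁻ _ in Ioo (0 : ℝ) t, 1 :=
          lintegral_mono fun s => ENNReal.ofReal_le_one.2 (min_le_right _ _)
      _ = volume (Ioo (0 : ℝ) t) := setLIntegral_one _
      _ = ENNReal.ofReal t := by rw [Real.volume_Ioo, sub_zero]
  rcases le_or_gt 1 ξ with hξ1 | hξ1
  · -- ξ ≥ 1 : bound by t
    have hmin : min ξ 1 = 1 := min_eq_right hξ1
    refine le_trans htriv (le_trans ?_ le_self_add)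
    rw [hmin, ENNReal.ofReal_one, mul_one]
    exact ENNReal.ofReal_le_ofReal hC1t
  · -- ξ < 1
    have hmin : min ξ 1 = ξ := min_eq_left hξ1.le
    have hind : (Ioo (0 : ℝ) 1).indicator (fun x => ENNReal.ofReal (x * Real.log (1 / x))) ξ
        = ENNReal.ofReal (ξ * Real.log (1 / ξ)) :=
      indicator_of_mem (mem_Ioo.2 ⟨hξ, hξ1⟩) _
    set b : ℝ := c * ξ with hb_def
    have hb : 0 < b := mul_pos hc hξ
    rcases le_or_gt t b with hbt | hbt
    · -- t ≤ b: trivial bound suffices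
      refine le_trans htriv (le_trans ?_ le_self_add)
      rw [hmin, ← ENNReal.ofReal_mul hC1.le]
      apply ENNReal.ofReal_le_ofReal
      calc t ≤ b := hbt
        _ = c * ξ := rfl
        _ ≤ C1 * ξ := by nlinarith
    · -- b < t : split the integral
      have hsplit : Ioo (0 : ℝ) t = Ioo 0 b ∪ Ico b t := (Ioo_union_Ico_eq_Ioo hb hbt.le).symm
      have hdisj : Disjoint (Ioo (0 : ℝ) b) (Ico b t) :=
        disjoint_left.2 fun x hx hx' => absurd hx.2 (not_lt.2 hx'.1)
      have p1 : ∫⁻ s in Ioo (0 : ℝ) b, ENNReal.ofReal (min (c * ξ / s) 1) ≤ ENNReal.ofReal b := by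
        calc ∫⁻ s in Ioo (0 : ℝ) b, ENNReal.ofReal (min (c * ξ / s) 1)
            ≤ ∫⁻ _ in Ioo (0 : ℝ) b, 1 :=
              lintegral_mono fun s => ENNReal.ofReal_le_one.2 (min_le_right _ _)
          _ = volume (Ioo (0 : ℝ) b) := setLIntegral_one _
          _ = ENNReal.ofReal b := by rw [Real.volume_Ioo, sub_zero]
      have hcont : ContinuousOn (fun s : ℝ => b / s) (Icc b t) :=
        continuousOn_const.div continuousOn_id fun x hx => ne_of_gt (lt_of_lt_of_le hb hx.1)
      have hint : IntegrableOn (fun s : ℝ => b / s) (Ico b t) volume :=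
        (hcont.integrableOn_Icc).mono_set Ico_subset_Icc_self
      have hval : ∫ s in Ico b t, b / s = b * (Real.log t - Real.log b) := by
        rw [integral_Ico_eq_integral_Ioo, ← integral_Ioc_eq_integral_Ioo,
          ← intervalIntegral.integral_of_le hbt.le]
        have h0 : (0 : ℝ) ∉ uIcc b t := by
          rw [uIcc_of_le hbt.le]
          exact fun h => absurd h.1 (not_le.2 hb)
        have : ∫ s in b..t, b / s = ∫ s in b..t, b * (1 / s) := by
          congr 1; ext s; rw [mul_one_div]
        rw [this, intervalIntegral.integral_const_mul, integral_one_div h0,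
          Real.log_div (ne_of_gt ht) (ne_of_gt hb)]
      have p2 : ∫⁻ s in Ico b t, ENNReal.ofReal (min (c * ξ / s) 1)
          ≤ ENNReal.ofReal (b * (Real.log t - Real.log b)) := by
        have hle : ∫⁻ s in Ico b t, ENNReal.ofReal (min (c * ξ / s) 1)
            ≤ ∫⁻ s in Ico b t, ENNReal.ofReal (b / s) := by
          apply lintegral_mono fun s => ENNReal.ofReal_le_ofReal (min_le_left _ _)
        have heq : ∫⁻ s in Ico b t, ENNReal.ofReal (b / s)
            = ENNReal.ofReal (∫ s in Ico b t, b / s) := by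
          rw [← ofReal_integral_eq_lintegral_ofReal hint]
          exact (ae_restrict_iff' measurableSet_Ico).2
            (ae_of_all _ fun s hs => div_nonneg hb.le (le_trans hb.le hs.1))
        rw [heq, hval] at hle
        exact hle
      have hlogb : Real.log b = Real.log c + Real.log ξ :=
        Real.log_mul (ne_of_gt hc) (ne_of_gt hξ)
      have hlog1ξ : Real.log (1 / ξ) = -Real.log ξ := by
        rw [one_div, Real.log_inv]
      have hreal : b + b * (Real.log t - Real.log b) ≤ C1 * ξ + c * (ξ * Real.log (1 / ξ)) := by
        rw [hlogb, hlog1ξ, hb_def]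
        have habs : Real.log t - Real.log c ≤ |Real.log t - Real.log c| := le_abs_self _
        nlinarith [mul_pos hc hξ, hξ.le]
      calc ∫⁻ s in Ioo (0 : ℝ) t, ENNReal.ofReal (min (c * ξ / s) 1)
          = (∫⁻ s in Ioo (0 : ℝ) b, ENNReal.ofReal (min (c * ξ / s) 1))
            + ∫⁻ s in Ico b t, ENNReal.ofReal (min (c * ξ / s) 1) := by
            rw [hsplit, lintegral_union measurableSet_Ico hdisj]
        _ ≤ ENNReal.ofReal b + ENNReal.ofReal (b * (Real.log t - Real.log b)) :=
            add_le_add p1 p2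
        _ = ENNReal.ofReal (b + b * (Real.log t - Real.log b)) := by
            rw [ENNReal.ofReal_add hb.le]
            exact mul_nonneg hb.le (by
              have := Real.log_le_log hb (le_of_lt hbt); linarith)
        _ ≤ ENNReal.ofReal (C1 * ξ + c * (ξ * Real.log (1 / ξ))) :=
            ENNReal.ofReal_le_ofReal hreal
        _ ≤ ENNReal.ofReal (C1 * ξ) + ENNReal.ofReal (c * (ξ * Real.log (1 / ξ))) :=
            ENNReal.ofReal_add_le
        _ = ENNReal.ofReal C1 * ENNReal.ofReal (min ξ 1)
            + ENNReal.ofReal c *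
              (Ioo (0 : ℝ) 1).indicator (fun x => ENNReal.ofReal (x * Real.log (1 / x))) ξ := by
            rw [hmin, hind, ENNReal.ofReal_mul hC1.le, ENNReal.ofReal_mul hc.le]

/-- If `∫_{(0,1)} ξ ln(1/ξ) ν(dξ) < ∞` and `∫_{(0,∞)} (ξ ∧ 1) ν(dξ) < ∞`, then for every
`t > 0` the quantity `λ = ∫₀^t ∫_{(0,∞)} (1 - exp(-2aξ/(σ²(e^{as}-1)))) ν(dξ) ds` is finite. -/
theorem lambda_finite (a σ : ℝ) (ha : 0 < a) (hσ : 0 < σ)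
    (ν : Measure ℝ)
    (hν1 : ∫⁻ ξ in Set.Ioo (0 : ℝ) 1, ENNReal.ofReal (ξ * Real.log (1 / ξ)) ∂ν < ⊤)
    (hν2 : ∫⁻ ξ in Set.Ioi (0 : ℝ), ENNReal.ofReal (min ξ 1) ∂ν < ⊤)
    (t : ℝ) (ht : 0 < t) :
    ∫⁻ s in Set.Ioo (0 : ℝ) t, ∫⁻ ξ in Set.Ioi (0 : ℝ),
      ENNReal.ofReal
        (1 - Real.exp (-(2 * a * ξ) / (σ ^ 2 * (Real.exp (a * s) - 1)))) ∂ν < ⊤ := by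
  set c : ℝ := 2 / σ ^ 2 with hc_def
  have hc : 0 < c := by positivity
  -- finiteness of ν on Ioi ε
  have hfin : ∀ ε : ℝ, 0 < ε → ν (Ioi ε) < ⊤ := by
    intro ε hε
    have hm0 : 0 < min ε 1 := lt_min hε one_pos
    have h1 : ENNReal.ofReal (min ε 1) * ν (Ioi ε)
        ≤ ∫⁻ ξ in Ioi (0 : ℝ), ENNReal.ofReal (min ξ 1) ∂ν := by
      calc ENNReal.ofReal (min ε 1) * ν (Ioi ε)
          = ∫⁻ _ in Ioi ε, ENNReal.ofReal (min ε 1) ∂ν := (setLIntegral_const _ _).symm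
        _ ≤ ∫⁻ ξ in Ioi ε, ENNReal.ofReal (min ξ 1) ∂ν := by
            refine setLIntegral_mono ((measurable_id.min measurable_const).ennreal_ofReal)
              fun ξ hξ => ENNReal.ofReal_le_ofReal (min_le_min (le_of_lt hξ) le_rfl)
        _ ≤ ∫⁻ ξ in Ioi (0 : ℝ), ENNReal.ofReal (min ξ 1) ∂ν :=
            lintegral_mono_set (Ioi_subset_Ioi hε.le)
    by_contra hcon
    rw [not_lt, top_le_iff] at hcon
    rw [hcon, ENNReal.mul_top (ENNReal.ofReal_pos.2 hm0).ne'] at h1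
    exact hν2.ne (top_le_iff.1 h1)
  -- σ-finiteness of ν restricted to (0,∞)
  haveI : SigmaFinite (ν.restrict (Ioi (0 : ℝ))) := by
    constructor
    refine ⟨⟨fun n => Iic 0 ∪ Ioi (1 / (n + 1) : ℝ), fun _ => trivial, fun n => ?_, ?_⟩⟩
    · have hpos : (0 : ℝ) < 1 / (n + 1) := by positivity
      rw [Measure.restrict_apply (measurableSet_Iic.union measurableSet_Ioi)]
      refine lt_of_le_of_lt (measure_mono ?_) (hfin _ hpos)
      rintro x ⟨hx1 | hx1, hx2⟩
      · exact absurd (mem_Ioi.1 hx2) (not_lt.2 hx1)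
      · exact hx1
    · ext x
      simp only [mem_iUnion, mem_union, mem_Iic, mem_Ioi, mem_univ, iff_true]
      rcases le_or_gt x 0 with hx | hx
      · exact ⟨0, Or.inl hx⟩
      · obtain ⟨n, hn⟩ := exists_nat_one_div_lt hx
        exact ⟨n, Or.inr hn⟩
  -- Step 1: pointwise bound
  have step1 : ∫⁻ s in Set.Ioo (0 : ℝ) t, ∫⁻ ξ in Set.Ioi (0 : ℝ),
      ENNReal.ofReal
        (1 - Real.exp (-(2 * a * ξ) / (σ ^ 2 * (Real.exp (a * s) - 1)))) ∂ν
      ≤ ∫⁻ s in Ioo (0 : ℝ) t, ∫⁻ ξ in Ioi (0 : ℝ), ENNReal.ofReal (min (c * ξ / s) 1) ∂ν := by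
    refine lintegral_mono_ae ((ae_restrict_iff' measurableSet_Ioo).2 (ae_of_all _ fun s hs => ?_))
    exact lintegral_mono fun ξ => key_ineq a σ s ξ ha hσ hs.1
  -- Step 2: Tonelli swap
  have step2 : ∫⁻ s in Ioo (0 : ℝ) t, ∫⁻ ξ in Ioi (0 : ℝ), ENNReal.ofReal (min (c * ξ / s) 1) ∂ν
      = ∫⁻ ξ in Ioi (0 : ℝ), ∫⁻ s in Ioo (0 : ℝ) t, ENNReal.ofReal (min (c * ξ / s) 1) ∂volume ∂ν := by
    have hmeas : AEMeasurable
        (Function.uncurry fun s ξ : ℝ => ENNReal.ofReal (min (c * ξ / s) 1))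
        ((volume.restrict (Ioo (0 : ℝ) t)).prod (ν.restrict (Ioi (0 : ℝ)))) :=
      ((((measurable_const.mul measurable_snd).div measurable_fst).min
        measurable_const).ennreal_ofReal).aemeasurable
    exact lintegral_lintegral_swap hmeas
  -- Step 3: bound the inner integral
  set C1 : ℝ := t + c * (1 + |Real.log t - Real.log c|) with hC1_def
  have hC1 : 0 < C1 := by
    have := abs_nonneg (Real.log t - Real.log c); nlinarith
  have step3 : ∫⁻ ξ in Ioi (0 : ℝ), ∫⁻ s in Ioo (0 : ℝ) t, ENNReal.ofReal (min (c * ξ / s) 1) ∂volume ∂ν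
      ≤ ∫⁻ ξ in Ioi (0 : ℝ),
          (ENNReal.ofReal C1 * ENNReal.ofReal (min ξ 1)
            + ENNReal.ofReal c *
              (Ioo (0 : ℝ) 1).indicator (fun x => ENNReal.ofReal (x * Real.log (1 / x))) ξ) ∂ν := by
    have hgmeas : Measurable fun ξ : ℝ =>
        ENNReal.ofReal C1 * ENNReal.ofReal (min ξ 1)
          + ENNReal.ofReal c *
            (Ioo (0 : ℝ) 1).indicator (fun x => ENNReal.ofReal (x * Real.log (1 / x))) ξ := by
      refine (((measurable_id.min measurable_const).ennreal_ofReal).const_mul _).add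
        (Measurable.const_mul ?_ _)
      exact Measurable.indicator
        ((measurable_id.mul (Real.measurable_log.comp
          (measurable_const.div measurable_id))).ennreal_ofReal) measurableSet_Ioo
    exact setLIntegral_mono hgmeas fun ξ hξ => I_bound c t ξ hc ht hξ
  -- Step 4: the bound integrates to a finite quantity
  have step4 : ∫⁻ ξ in Ioi (0 : ℝ),
      (ENNReal.ofReal C1 * ENNReal.ofReal (min ξ 1)
        + ENNReal.ofReal c *
          (Ioo (0 : ℝ) 1).indicator (fun x => ENNReal.ofReal (x * Real.log (1 / x))) ξ) ∂ν < ⊤ := by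
    have hm1 : Measurable fun ξ : ℝ => ENNReal.ofReal C1 * ENNReal.ofReal (min ξ 1) :=
      ((measurable_id.min measurable_const).ennreal_ofReal).const_mul _
    have hm2 : Measurable fun ξ : ℝ =>
        (Ioo (0 : ℝ) 1).indicator (fun x => ENNReal.ofReal (x * Real.log (1 / x))) ξ :=
      Measurable.indicator
        ((measurable_id.mul (Real.measurable_log.comp
          (measurable_const.div measurable_id))).ennreal_ofReal) measurableSet_Ioo
    rw [lintegral_add_left hm1, lintegral_const_mul' _ _ ENNReal.ofReal_ne_top,
      lintegral_const_mul' _ _ ENNReal.ofReal_ne_top]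
    have hindint : ∫⁻ ξ in Ioi (0 : ℝ),
        (Ioo (0 : ℝ) 1).indicator (fun x => ENNReal.ofReal (x * Real.log (1 / x))) ξ ∂ν
        = ∫⁻ ξ in Ioo (0 : ℝ) 1, ENNReal.ofReal (ξ * Real.log (1 / ξ)) ∂ν := by
      rw [lintegral_indicator measurableSet_Ioo, Measure.restrict_restrict measurableSet_Ioo,
        inter_eq_self_of_subset_left Ioo_subset_Ioi_self]
    rw [hindint]
    exact ENNReal.add_lt_top.2 ⟨ENNReal.mul_lt_top ENNReal.ofReal_lt_top hν2,
      ENNReal.mul_lt_top ENNReal.ofReal_lt_top hν1⟩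
  exact (step1.trans (step2.le.trans step3)).trans_lt step4
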